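/- arXiv:0712.1401 — 8 statements merged into one kernel-verified Lean document; each statement's English description precedes it below -/
import Mathlib

section
/- Let r⁺ satisfy the partial cocycle identity (CCI⁺). Then for every pair of configurations γ⁺, γ⁻ ⊆ X, every finite configuration η⁺, and any two duplicate-free enumerations (x₁, …, xₙ) and (x'₁, …, x'ₙ) of η⁺, the two iterated products r⁺(γ⁺, γ⁻, x₁)·r⁺(γ⁺∪{x₁}, γ⁻, x₂)·…·r⁺(γ⁺∪{x₁,…,x_{n−1}}, γ⁻, xₙ) and r⁺(γ⁺, γ⁻, x'₁)·r⁺(γ⁺∪{x'₁}, γ⁻, x'₂)·…·r⁺(γ⁺∪{x'₁,…,x'_{n−1}}, γ⁻, x'ₙ) are equal; hence R⁺(γ⁺, γ⁻, η⁺) is well defined. -/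
open scoped NNReal

/-- Iterated product of the partial relative energy density `r⁺` along an
enumeration (list) of a finite configuration: the `+`-configuration grows by
one point at each step. -/
def RplusL {X : Type*} (rp : Set X → Set X → X → ℝ≥0) (γm : Set X) :
    Set X → List X → ℝ≥0
  | _, [] => 1
  | γp, x :: xs => rp γp γm x * RplusL rp γm (insert x γp) xs


theorem RplusL_perm {X : Type*} [DecidableEq X]
    (rp : Set X → Set X → X → ℝ≥0)
    (hCCIp : ∀ (γp γm : Set X) (x x' : X),
      rp (insert x' γp) γm x * rp γp γm x' = rp (insert x γp) γm x' * rp γp γm x)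
    (γm : Set X) {l₁ l₂ : List X} (hp : l₁.Perm l₂) :
    ∀ γp, RplusL rp γm γp l₁ = RplusL rp γm γp l₂ := by
  induction hp with
  | nil => intro γp; rfl
  | cons x _ ih => intro γp; simp only [RplusL, ih]
  | swap x y l => intro γp
                  simp only [RplusL]
                  rw [Set.insert_comm, ← mul_assoc, ← mul_assoc, mul_comm (rp γp γm y), hCCIp, mul_comm (rp (insert x γp) γm y)]
  | trans _ _ ih₁ ih₂ => intro γp; rw [ih₁, ih₂]

/-- If `r⁺` satisfies the partial cocycle identity (CCI⁺), then for every pair of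
configurations `γ⁺, γ⁻`, every finite configuration `η⁺`, and any two
duplicate-free enumerations of `η⁺`, the corresponding iterated products
coincide; hence `R⁺(γ⁺, γ⁻, η⁺)` is well defined. -/
theorem Rplus_well_defined {X : Type*} [DecidableEq X]
    (rp : Set X → Set X → X → ℝ≥0)
    (hCCIp : ∀ (γp γm : Set X) (x x' : X),
      rp (insert x' γp) γm x * rp γp γm x' = rp (insert x γp) γm x' * rp γp γm x)
    (γp γm : Set X) (η : Finset X) (l₁ l₂ : List X)
    (h₁ : l₁.Nodup) (h₂ : l₂.Nodup)
    (hl₁ : l₁.toFinset = η) (hl₂ : l₂.toFinset = η) :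
    RplusL rp γm γp l₁ = RplusL rp γm γp l₂ := by
  exact RplusL_perm rp hCCIp γm
    (List.perm_of_nodup_nodup_toFinset_eq h₁ h₂ (hl₁.trans hl₂.symm)) γp
end

section
/- Let r⁺, r⁻ satisfy the partial cocycle identities (CCI⁺), (CCI⁻) and the balance identity (Bal). Then for all configurations γ⁺, γ⁻ ⊆ X and all x, x', y ∈ X the following chain of equalities holds: r⁺(γ⁺∪x, γ⁻∪y, x')·r(γ⁺, γ⁻, x, y) = r(γ⁺∪x, γ⁻, x', y)·r⁺(γ⁺, γ⁻, x) = r(γ⁺∪x', γ⁻, x, y)·r⁺(γ⁺, γ⁻, x') = r⁺(γ⁺∪x', γ⁻∪y, x)·r(γ⁺, γ⁻, x', y). -/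
open scoped NNReal

/-- The relative energy density
`r(γ⁺, γ⁻, x, y) := r⁺(γ⁺, γ⁻∪y, x)·r⁻(γ⁺, γ⁻, y)`. -/
def relE {X : Type*} (rp rm : Set X → Set X → X → ℝ≥0)
    (γp γm : Set X) (x y : X) : ℝ≥0 :=
  rp γp (insert y γm) x * rm γp γm y

/-- Under (CCI⁺), (CCI⁻) and the balance identity (Bal), the chain of equalities
`r⁺(γ⁺∪x, γ⁻∪y, x')·r(γ⁺, γ⁻, x, y) = r(γ⁺∪x, γ⁻, x', y)·r⁺(γ⁺, γ⁻, x)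
 = r(γ⁺∪x', γ⁻, x, y)·r⁺(γ⁺, γ⁻, x') = r⁺(γ⁺∪x', γ⁻∪y, x)·r(γ⁺, γ⁻, x', y)`
holds. -/
theorem relE_chain_plus {X : Type*}
    (rp rm : Set X → Set X → X → ℝ≥0)
    (hCCIp : ∀ (γp γm : Set X) (x x' : X),
      rp (insert x' γp) γm x * rp γp γm x' = rp (insert x γp) γm x' * rp γp γm x)
    (hCCIm : ∀ (γp γm : Set X) (y y' : X),
      rm γp (insert y' γm) y * rm γp γm y' = rm γp (insert y γm) y' * rm γp γm y)
    (hBal : ∀ (γp γm : Set X) (x y : X),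
      rp γp (insert y γm) x * rm γp γm y = rm (insert x γp) γm y * rp γp γm x)
    (γp γm : Set X) (x x' y : X) :
    rp (insert x γp) (insert y γm) x' * relE rp rm γp γm x y
        = relE rp rm (insert x γp) γm x' y * rp γp γm x
      ∧ relE rp rm (insert x γp) γm x' y * rp γp γm x
        = relE rp rm (insert x' γp) γm x y * rp γp γm x'
      ∧ relE rp rm (insert x' γp) γm x y * rp γp γm x'
        = rp (insert x' γp) (insert y γm) x * relE rp rm γp γm x' y := by
  have key : ∀ a b : X, relE rp rm (insert a γp) γm b y * rp γp γm a
      = rp (insert a γp) (insert y γm) b * (rp γp (insert y γm) a * rm γp γm y) := by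
    intro a b
    rw [relE, mul_assoc, ← hBal γp γm a y]
  refine ⟨?_, ?_, ?_⟩
  · rw [key x x', relE]
  · rw [key x x', key x' x, ← mul_assoc, ← mul_assoc, hCCIp γp (insert y γm) x' x]
  · rw [key x' x, relE]
end

section
/- Let r⁺, r⁻ satisfy the partial cocycle identities (CCI⁺), (CCI⁻) and the balance identity (Bal). Then for all configurations γ⁺, γ⁻ ⊆ X and all x, y, y' ∈ X the following chain of equalities holds: r⁻(γ⁺∪x, γ⁻∪y, y')·r(γ⁺, γ⁻, x, y) = r(γ⁺, γ⁻∪y, x, y')·r⁻(γ⁺, γ⁻, y) = r(γ⁺, γ⁻∪y', x, y)·r⁻(γ⁺, γ⁻, y') = r⁻(γ⁺∪x, γ⁻∪y', y)·r(γ⁺, γ⁻, x, y'). -/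
open scoped NNReal

/-- Under (CCI⁺), (CCI⁻) and the balance identity (Bal), the chain of equalities
`r⁻(γ⁺∪x, γ⁻∪y, y')·r(γ⁺, γ⁻, x, y) = r(γ⁺, γ⁻∪y, x, y')·r⁻(γ⁺, γ⁻, y)
 = r(γ⁺, γ⁻∪y', x, y)·r⁻(γ⁺, γ⁻, y') = r⁻(γ⁺∪x, γ⁻∪y', y)·r(γ⁺, γ⁻, x, y')`
holds. -/
theorem relE_chain_minus {X : Type*}
    (rp rm : Set X → Set X → X → ℝ≥0)
    (hCCIp : ∀ (γp γm : Set X) (x x' : X),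
      rp (insert x' γp) γm x * rp γp γm x' = rp (insert x γp) γm x' * rp γp γm x)
    (hCCIm : ∀ (γp γm : Set X) (y y' : X),
      rm γp (insert y' γm) y * rm γp γm y' = rm γp (insert y γm) y' * rm γp γm y)
    (hBal : ∀ (γp γm : Set X) (x y : X),
      rp γp (insert y γm) x * rm γp γm y = rm (insert x γp) γm y * rp γp γm x)
    (γp γm : Set X) (x y y' : X) :
    rm (insert x γp) (insert y γm) y' * relE rp rm γp γm x y
        = relE rp rm γp (insert y γm) x y' * rm γp γm y
      ∧ relE rp rm γp (insert y γm) x y' * rm γp γm y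
        = relE rp rm γp (insert y' γm) x y * rm γp γm y'
      ∧ relE rp rm γp (insert y' γm) x y * rm γp γm y'
        = rm (insert x γp) (insert y' γm) y * relE rp rm γp γm x y' := by
  have h1 : ∀ a b : X, rm (insert x γp) (insert a γm) b * relE rp rm γp γm x a
      = relE rp rm γp (insert a γm) x b * rm γp γm a := by
    intro a b
    unfold relE
    calc rm (insert x γp) (insert a γm) b * (rp γp (insert a γm) x * rm γp γm a)
        = (rm (insert x γp) (insert a γm) b * rp γp (insert a γm) x) * rm γp γm a := by ring
      _ = (rp γp (insert b (insert a γm)) x * rm γp (insert a γm) b) * rm γp γm a := by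
            rw [← hBal γp (insert a γm) x b]
      _ = _ := by ring
  refine ⟨h1 y y', ?_, (h1 y' y).symm⟩
  unfold relE
  calc rp γp (insert y' (insert y γm)) x * rm γp (insert y γm) y' * rm γp γm y
      = rp γp (insert y' (insert y γm)) x * (rm γp (insert y γm) y' * rm γp γm y) := by ring
    _ = rp γp (insert y (insert y' γm)) x * (rm γp (insert y' γm) y * rm γp γm y') := by
          rw [Set.insert_comm, ← hCCIm γp γm y' y]
    _ = _ := by ring
end

section
/- Let r⁺, r⁻ satisfy the partial cocycle identities (CCI⁺), (CCI⁻) and the balance identity (Bal). Then the relative energy density r satisfies the cocycle identity: for all configurations γ⁺, γ⁻ ⊆ X and all x, x', y, y' ∈ X, r(γ⁺∪x', γ⁻∪y', x, y)·r(γ⁺, γ⁻, x', y') = r(γ⁺∪x, γ⁻∪y, x', y')·r(γ⁺, γ⁻, x, y). -/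
open scoped NNReal

/-- Under (CCI⁺), (CCI⁻) and the balance identity (Bal), the relative energy
density `r` satisfies the cocycle identity:
`r(γ⁺∪x', γ⁻∪y', x, y)·r(γ⁺, γ⁻, x', y') = r(γ⁺∪x, γ⁻∪y, x', y')·r(γ⁺, γ⁻, x, y)`. -/
theorem relE_cocycle {X : Type*}
    (rp rm : Set X → Set X → X → ℝ≥0)
    (hCCIp : ∀ (γp γm : Set X) (x x' : X),
      rp (insert x' γp) γm x * rp γp γm x' = rp (insert x γp) γm x' * rp γp γm x)
    (hCCIm : ∀ (γp γm : Set X) (y y' : X),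
      rm γp (insert y' γm) y * rm γp γm y' = rm γp (insert y γm) y' * rm γp γm y)
    (hBal : ∀ (γp γm : Set X) (x y : X),
      rp γp (insert y γm) x * rm γp γm y = rm (insert x γp) γm y * rp γp γm x)
    (γp γm : Set X) (x x' y y' : X) :
    relE rp rm (insert x' γp) (insert y' γm) x y * relE rp rm γp γm x' y'
      = relE rp rm (insert x γp) (insert y γm) x' y' * relE rp rm γp γm x y := by
  have h1 := hBal γp (insert y' γm) x' y
  have h2 := hCCIp γp (insert y (insert y' γm)) x x'
  have h3 := hCCIm γp γm y y'
  have h4 := hBal γp (insert y γm) x y'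
  simp only [relE, Set.insert_comm y' y γm] at *
  apply NNReal.coe_injective
  push_cast
  have h1' := congrArg NNReal.toReal h1
  have h2' := congrArg NNReal.toReal h2
  have h3' := congrArg NNReal.toReal h3
  have h4' := congrArg NNReal.toReal h4
  push_cast at h1' h2' h3' h4'
  set a := (rp (insert x' γp) (insert y (insert y' γm)) x : ℝ)
  set b := (rm (insert x' γp) (insert y' γm) y : ℝ)
  set c := (rp γp (insert y' γm) x' : ℝ)
  set d := (rm γp γm y' : ℝ)
  set e := (rp γp (insert y (insert y' γm)) x' : ℝ)
  set f := (rm γp (insert y' γm) y : ℝ)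
  set g := (rp (insert x γp) (insert y (insert y' γm)) x' : ℝ)
  set h := (rp γp (insert y (insert y' γm)) x : ℝ)
  set i := (rm γp (insert y γm) y' : ℝ)
  set j := (rm γp γm y : ℝ)
  set k := (rm (insert x γp) (insert y γm) y' : ℝ)
  set l := (rp γp (insert y γm) x : ℝ)
  linear_combination -(a * d) * h1' + f * d * h2' + g * h * h3' + g * j * h4'
end

section
/- Let r⁺, r⁻ satisfy the partial cocycle identities (CCI⁺), (CCI⁻) and the balance identity (Bal). Then for all configurations γ⁺, γ⁻ ⊆ X, every finite configuration η⁺, and every y ∈ X: R⁺(γ⁺, γ⁻∪y, η⁺)·r⁻(γ⁺, γ⁻, y) = r⁻(γ⁺∪η⁺, γ⁻, y)·R⁺(γ⁺, γ⁻, η⁺). -/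
open scoped NNReal

/-- `R⁺(γ⁺, γ⁻, η⁺)`: the iterated product of `r⁺` along a (fixed, arbitrary)
duplicate-free enumeration of the finite configuration `η⁺`; under (CCI⁺) it is
independent of the enumeration. -/
noncomputable def Rplus {X : Type*} (rp : Set X → Set X → X → ℝ≥0)
    (γp γm : Set X) (η : Finset X) : ℝ≥0 :=
  RplusL rp γm γp η.toList

/-- Under (CCI⁺), (CCI⁻) and the balance identity (Bal), for all configurations
`γ⁺, γ⁻`, every finite configuration `η⁺` and every point `y`:
`R⁺(γ⁺, γ⁻∪y, η⁺)·r⁻(γ⁺, γ⁻, y) = r⁻(γ⁺∪η⁺, γ⁻, y)·R⁺(γ⁺, γ⁻, η⁺)`. -/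
theorem Rplus_balance_point {X : Type*}
    (rp rm : Set X → Set X → X → ℝ≥0)
    (hCCIp : ∀ (γp γm : Set X) (x x' : X),
      rp (insert x' γp) γm x * rp γp γm x' = rp (insert x γp) γm x' * rp γp γm x)
    (hCCIm : ∀ (γp γm : Set X) (y y' : X),
      rm γp (insert y' γm) y * rm γp γm y' = rm γp (insert y γm) y' * rm γp γm y)
    (hBal : ∀ (γp γm : Set X) (x y : X),
      rp γp (insert y γm) x * rm γp γm y = rm (insert x γp) γm y * rp γp γm x)
    (γp γm : Set X) (ηp : Finset X) (y : X) :
    Rplus rp γp (insert y γm) ηp * rm γp γm y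
      = rm (γp ∪ ↑ηp) γm y * Rplus rp γp γm ηp := by
  have key : ∀ (l : List X) (γp : Set X),
      RplusL rp (insert y γm) γp l * rm γp γm y
        = rm (γp ∪ {a | a ∈ l}) γm y * RplusL rp γm γp l := by
    intro l
    induction l with
    | nil =>
      intro γp
      simp [RplusL]
    | cons x xs ih =>
      intro γp
      have h1 : (insert x γp) ∪ {a | a ∈ xs} = γp ∪ {a | a ∈ x :: xs} := by
        ext a; simp [Set.mem_insert_iff, or_assoc, or_left_comm, or_comm]
      calc rp γp (insert y γm) x * RplusL rp (insert y γm) (insert x γp) xs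
            * rm γp γm y
          = RplusL rp (insert y γm) (insert x γp) xs
            * (rp γp (insert y γm) x * rm γp γm y) := by ring
        _ = RplusL rp (insert y γm) (insert x γp) xs
            * (rm (insert x γp) γm y * rp γp γm x) := by rw [hBal]
        _ = (RplusL rp (insert y γm) (insert x γp) xs
            * rm (insert x γp) γm y) * rp γp γm x := by ring
        _ = (rm ((insert x γp) ∪ {a | a ∈ xs}) γm y
            * RplusL rp γm (insert x γp) xs) * rp γp γm x := by rw [ih]
        _ = rm (γp ∪ {a | a ∈ x :: xs}) γm y
            * (rp γp γm x * RplusL rp γm (insert x γp) xs) := by rw [h1]; ring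
  have h2 : γp ∪ {a | a ∈ ηp.toList} = γp ∪ ↑ηp := by
    ext a; simp
  have := key ηp.toList γp
  rw [h2] at this
  exact this
end

section
/- Let r⁺, r⁻ satisfy the partial cocycle identities (CCI⁺), (CCI⁻) and the balance identity (Bal). Then for all configurations γ⁺, γ⁻ ⊆ X and all finite configurations η⁺, η⁻ the balance identity for R± holds: R⁺(γ⁺, γ⁻∪η⁻, η⁺)·R⁻(γ⁺, γ⁻, η⁻) = R⁻(γ⁺∪η⁺, γ⁻, η⁻)·R⁺(γ⁺, γ⁻, η⁺). -/
open scoped NNReal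

/-- Iterated product of the partial relative energy density `r⁻` along an
enumeration (list) of a finite configuration. -/
def RminusL {X : Type*} (rm : Set X → Set X → X → ℝ≥0) (γp : Set X) :
    Set X → List X → ℝ≥0
  | _, [] => 1
  | γm, y :: ys => rm γp γm y * RminusL rm γp (insert y γm) ys

/-- `R⁻(γ⁺, γ⁻, η⁻)`: the iterated product of `r⁻` along a (fixed, arbitrary)
duplicate-free enumeration of the finite configuration `η⁻`; under (CCI⁻) it is
independent of the enumeration. -/
noncomputable def Rminus {X : Type*} (rm : Set X → Set X → X → ℝ≥0)
    (γp γm : Set X) (η : Finset X) : ℝ≥0 :=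
  RminusL rm γp γm η.toList


private lemma foldl_insert_eq {X : Type*} (l : List X) (γ : Set X) :
    l.foldl (fun s x => insert x s) γ = γ ∪ {x | x ∈ l} := by
  induction l generalizing γ with
  | nil => simp
  | cons a l ih =>
    simp only [List.foldl_cons, ih]
    ext z; simp [Set.insert_def]; tauto

private lemma lemA {X : Type*} (rp rm : Set X → Set X → X → ℝ≥0)
    (hBal : ∀ (γp γm : Set X) (x y : X),
      rp γp (insert y γm) x * rm γp γm y = rm (insert x γp) γm y * rp γp γm x)
    (γm : Set X) (y : X) (xs : List X) : ∀ γp : Set X,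
    RplusL rp (insert y γm) γp xs * rm γp γm y
      = rm (xs.foldl (fun s x => insert x s) γp) γm y * RplusL rp γm γp xs := by
  induction xs with
  | nil => intro γp; simp [RplusL]
  | cons x xs ih =>
    intro γp
    simp only [RplusL, List.foldl_cons]
    calc rp γp (insert y γm) x * RplusL rp (insert y γm) (insert x γp) xs * rm γp γm y
        = RplusL rp (insert y γm) (insert x γp) xs * (rp γp (insert y γm) x * rm γp γm y) := by
          ring
      _ = RplusL rp (insert y γm) (insert x γp) xs * (rm (insert x γp) γm y * rp γp γm x) := by
          rw [hBal]
      _ = (RplusL rp (insert y γm) (insert x γp) xs * rm (insert x γp) γm y) * rp γp γm x := by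
          ring
      _ = (rm (xs.foldl (fun s x => insert x s) (insert x γp)) γm y
            * RplusL rp γm (insert x γp) xs) * rp γp γm x := by rw [ih]
      _ = rm (xs.foldl (fun s x => insert x s) (insert x γp)) γm y
            * (rp γp γm x * RplusL rp γm (insert x γp) xs) := by ring

private lemma lemB {X : Type*} (rp rm : Set X → Set X → X → ℝ≥0)
    (hBal : ∀ (γp γm : Set X) (x y : X),
      rp γp (insert y γm) x * rm γp γm y = rm (insert x γp) γm y * rp γp γm x)
    (γp : Set X) (xs : List X) (ys : List X) : ∀ γm : Set X,
    RplusL rp (ys.foldl (fun s y => insert y s) γm) γp xs * RminusL rm γp γm ys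
      = RminusL rm (xs.foldl (fun s x => insert x s) γp) γm ys * RplusL rp γm γp xs := by
  induction ys with
  | nil => intro γm; simp [RminusL]
  | cons y ys ih =>
    intro γm
    simp only [RminusL, List.foldl_cons]
    calc RplusL rp (ys.foldl (fun s y => insert y s) (insert y γm)) γp xs
          * (rm γp γm y * RminusL rm γp (insert y γm) ys)
        = (RplusL rp (ys.foldl (fun s y => insert y s) (insert y γm)) γp xs
            * RminusL rm γp (insert y γm) ys) * rm γp γm y := by ring
      _ = (RminusL rm (xs.foldl (fun s x => insert x s) γp) (insert y γm) ys
            * RplusL rp (insert y γm) γp xs) * rm γp γm y := by rw [ih]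
      _ = RminusL rm (xs.foldl (fun s x => insert x s) γp) (insert y γm) ys
            * (RplusL rp (insert y γm) γp xs * rm γp γm y) := by ring
      _ = RminusL rm (xs.foldl (fun s x => insert x s) γp) (insert y γm) ys
            * (rm (xs.foldl (fun s x => insert x s) γp) γm y * RplusL rp γm γp xs) := by
          rw [lemA rp rm hBal]
      _ = (rm (xs.foldl (fun s x => insert x s) γp) γm y
            * RminusL rm (xs.foldl (fun s x => insert x s) γp) (insert y γm) ys)
            * RplusL rp γm γp xs := by ring

/-- Under (CCI⁺), (CCI⁻) and the balance identity (Bal), for all configurations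
`γ⁺, γ⁻` and all finite configurations `η⁺, η⁻` the balance identity for `R±`
holds: `R⁺(γ⁺, γ⁻∪η⁻, η⁺)·R⁻(γ⁺, γ⁻, η⁻) = R⁻(γ⁺∪η⁺, γ⁻, η⁻)·R⁺(γ⁺, γ⁻, η⁺)`. -/
theorem R_balance {X : Type*}
    (rp rm : Set X → Set X → X → ℝ≥0)
    (hCCIp : ∀ (γp γm : Set X) (x x' : X),
      rp (insert x' γp) γm x * rp γp γm x' = rp (insert x γp) γm x' * rp γp γm x)
    (hCCIm : ∀ (γp γm : Set X) (y y' : X),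
      rm γp (insert y' γm) y * rm γp γm y' = rm γp (insert y γm) y' * rm γp γm y)
    (hBal : ∀ (γp γm : Set X) (x y : X),
      rp γp (insert y γm) x * rm γp γm y = rm (insert x γp) γm y * rp γp γm x)
    (γp γm : Set X) (ηp ηm : Finset X) :
    Rplus rp γp (γm ∪ ↑ηm) ηp * Rminus rm γp γm ηm
      = Rminus rm (γp ∪ ↑ηp) γm ηm * Rplus rp γp γm ηp := by
  have hm : (γm ∪ ↑ηm : Set X) = ηm.toList.foldl (fun s y => insert y s) γm := by
    rw [foldl_insert_eq]; ext z; simp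
  have hp : (γp ∪ ↑ηp : Set X) = ηp.toList.foldl (fun s x => insert x s) γp := by
    rw [foldl_insert_eq]; ext z; simp
  simp only [Rplus, Rminus, hm, hp]
  exact lemB rp rm hBal γp ηp.toList ηm.toList γm
end

section
/- Let r⁺, r⁻ satisfy the partial cocycle identities (CCI⁺), (CCI⁻) and the balance identity (Bal). Then for all configurations γ⁺, γ⁻ ⊆ X, every finite configuration η⁺, and all disjoint finite configurations η₁⁻, η₂⁻: R(γ⁺, γ⁻, η⁺, η₁⁻ ∪ η₂⁻) = R(γ⁺, γ⁻∪η₂⁻, η⁺, η₁⁻)·R⁻(γ⁺, γ⁻, η₂⁻). -/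
open scoped NNReal

/-- `R(γ⁺, γ⁻, η⁺, η⁻) := R⁺(γ⁺, γ⁻∪η⁻, η⁺)·R⁻(γ⁺, γ⁻, η⁻)`. -/
noncomputable def Rfull {X : Type*} (rp rm : Set X → Set X → X → ℝ≥0)
    (γp γm : Set X) (ηp ηm : Finset X) : ℝ≥0 :=
  Rplus rp γp (γm ∪ ↑ηm) ηp * Rminus rm γp γm ηm

lemma RminusL_perm {X : Type*} (rm : Set X → Set X → X → ℝ≥0) (γp : Set X)
    (hCCIm : ∀ (γp γm : Set X) (y y' : X),
      rm γp (insert y' γm) y * rm γp γm y' = rm γp (insert y γm) y' * rm γp γm y)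
    {l l' : List X} (h : l.Perm l') : ∀ γm : Set X,
    RminusL rm γp γm l = RminusL rm γp γm l' := by
  induction h with
  | nil => intro γm; rfl
  | cons a _ ih => intro γm; simp [RminusL, ih]
  | swap a b t =>
      intro γm
      simp only [RminusL, ← mul_assoc]
      rw [mul_comm (rm γp γm b) (rm γp (insert b γm) a), hCCIm,
        mul_comm (rm γp (insert a γm) b) (rm γp γm a), Set.insert_comm]
  | trans _ _ ih1 ih2 => intro γm; rw [ih1, ih2]

lemma RminusL_append {X : Type*} (rm : Set X → Set X → X → ℝ≥0) (γp : Set X)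
    (l₁ l₂ : List X) : ∀ γm : Set X,
    RminusL rm γp γm (l₁ ++ l₂)
      = RminusL rm γp γm l₁ * RminusL rm γp (γm ∪ {a | a ∈ l₁}) l₂ := by
  induction l₁ with
  | nil =>
      intro γm
      have : γm ∪ {a : X | a ∈ ([] : List X)} = γm := by simp
      simp [RminusL, this]
  | cons x t ih =>
      intro γm
      have hset : insert x γm ∪ {a | a ∈ t} = γm ∪ {a | a ∈ x :: t} := by
        ext a; simp [or_assoc, or_left_comm, or_comm]
      show rm γp γm x * RminusL rm γp (insert x γm) (t ++ l₂) = _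
      rw [ih, hset, RminusL, mul_assoc]

/-- Under (CCI⁺), (CCI⁻) and the balance identity (Bal), for all configurations
`γ⁺, γ⁻`, every finite configuration `η⁺` and all disjoint finite
configurations `η₁⁻, η₂⁻`:
`R(γ⁺, γ⁻, η⁺, η₁⁻ ∪ η₂⁻) = R(γ⁺, γ⁻∪η₂⁻, η⁺, η₁⁻)·R⁻(γ⁺, γ⁻, η₂⁻)`. -/
theorem R_union_minus {X : Type*} [DecidableEq X]
    (rp rm : Set X → Set X → X → ℝ≥0)
    (hCCIp : ∀ (γp γm : Set X) (x x' : X),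
      rp (insert x' γp) γm x * rp γp γm x' = rp (insert x γp) γm x' * rp γp γm x)
    (hCCIm : ∀ (γp γm : Set X) (y y' : X),
      rm γp (insert y' γm) y * rm γp γm y' = rm γp (insert y γm) y' * rm γp γm y)
    (hBal : ∀ (γp γm : Set X) (x y : X),
      rp γp (insert y γm) x * rm γp γm y = rm (insert x γp) γm y * rp γp γm x)
    (γp γm : Set X) (ηp η₁ η₂ : Finset X) (hdisj : Disjoint η₁ η₂) :
    Rfull rp rm γp γm ηp (η₁ ∪ η₂)
      = Rfull rp rm γp (γm ∪ ↑η₂) ηp η₁ * Rminus rm γp γm η₂ := by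
  have hperm : (η₁ ∪ η₂).toList.Perm (η₂.toList ++ η₁.toList) := by
    rw [← Multiset.coe_eq_coe]
    have : ((η₂.toList ++ η₁.toList : List X) : Multiset X) = ↑η₂.toList + ↑η₁.toList := rfl
    rw [this, Finset.coe_toList, Finset.coe_toList, Finset.coe_toList,
      ← Finset.disjUnion_eq_union _ _ hdisj]
    exact add_comm η₁.val η₂.val
  have hsetL : {a : X | a ∈ η₂.toList} = (↑η₂ : Set X) := by
    ext a; simp
  have hset2 : γm ∪ (↑(η₁ ∪ η₂) : Set X) = (γm ∪ ↑η₂) ∪ ↑η₁ := by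
    ext a; simp [or_assoc, or_left_comm, or_comm]
  unfold Rfull Rminus Rplus
  rw [RminusL_perm rm γp hCCIm hperm, RminusL_append, hsetL, hset2, mul_comm
    (RminusL rm γp γm η₂.toList), mul_assoc]
end

section
/- Let φ : X × X → ℝ be symmetric (φ(x,y) = φ(y,x) for all x, y), and let r₁, r₂ be functions assigning to a finite configuration γ and a point x ∈ X a value in [0, ∞), each satisfying the cocycle identity rᵢ(γ∪{x'}, x)·rᵢ(γ, x') = rᵢ(γ∪{x}, x')·rᵢ(γ, x) for all finite configurations γ and all x, x' ∈ X. Define r₀(γ, x) := exp(−∑_{y∈γ} φ(x,y)) for finite configurations γ, and set r⁺(γ⁺, γ⁻, x) := r₀(γ⁻, x)·r₁(γ⁺, x) and r⁻(γ⁺, γ⁻, y) := r₀(γ⁺, y)·r₂(γ⁻, y). Then r⁺ and r⁻ satisfy the partial cocycle identities (CCI⁺) and (CCI⁻) for all finite configurations γ⁺, γ⁻ and all points, and they satisfy the balance identity r⁺(γ⁺, γ⁻∪{y}, x)·r⁻(γ⁺, γ⁻, y) = r⁻(γ⁺∪{x}, γ⁻, y)·r⁺(γ⁺, γ⁻, x)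 for all finite configurations γ⁺, γ⁻ and all x ∉ γ⁺, y ∉ γ⁻. -/
/-- Given a symmetric pair interaction `φ` and one-component relative energy
densities `r₁, r₂` (nonnegative and satisfying the one-component cocycle
identity), the partial relative energy densities
`r⁺(γ⁺, γ⁻, x) := r₀(γ⁻, x)·r₁(γ⁺, x)` and `r⁻(γ⁺, γ⁻, y) := r₀(γ⁺, y)·r₂(γ⁻, y)`,
where `r₀(γ, x) := exp(−∑_{y∈γ} φ(x,y))`, satisfy the partial cocycle
identities (CCI⁺), (CCI⁻) and the balance identity (Bal). -/
theorem pair_potential_perturbation {X : Type*} [DecidableEq X]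
    (φ : X → X → ℝ) (hφ : ∀ x y, φ x y = φ y x)
    (r₁ r₂ : Finset X → X → ℝ)
    (hr₁nonneg : ∀ (γ : Finset X) (x : X), 0 ≤ r₁ γ x)
    (hr₂nonneg : ∀ (γ : Finset X) (x : X), 0 ≤ r₂ γ x)
    (hr₁cocycle : ∀ (γ : Finset X) (x x' : X),
      r₁ (insert x' γ) x * r₁ γ x' = r₁ (insert x γ) x' * r₁ γ x)
    (hr₂cocycle : ∀ (γ : Finset X) (x x' : X),
      r₂ (insert x' γ) x * r₂ γ x' = r₂ (insert x γ) x' * r₂ γ x)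
    (r₀ : Finset X → X → ℝ) (hr₀ : ∀ (γ : Finset X) (x : X),
      r₀ γ x = Real.exp (-(∑ y ∈ γ, φ x y)))
    (rp rm : Finset X → Finset X → X → ℝ)
    (hrp : ∀ (γp γm : Finset X) (x : X), rp γp γm x = r₀ γm x * r₁ γp x)
    (hrm : ∀ (γp γm : Finset X) (y : X), rm γp γm y = r₀ γp y * r₂ γm y) :
    (∀ (γp γm : Finset X) (x x' : X),
      rp (insert x' γp) γm x * rp γp γm x' = rp (insert x γp) γm x' * rp γp γm x)
    ∧ (∀ (γp γm : Finset X) (y y' : X),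
      rm γp (insert y' γm) y * rm γp γm y' = rm γp (insert y γm) y' * rm γp γm y)
    ∧ (∀ (γp γm : Finset X) (x y : X), x ∉ γp → y ∉ γm →
      rp γp (insert y γm) x * rm γp γm y = rm (insert x γp) γm y * rp γp γm x) := by
  refine ⟨?_, ?_, ?_⟩
  · intro γp γm x x'
    simp only [hrp]
    linear_combination (r₀ γm x * r₀ γm x') * hr₁cocycle γp x x'
  · intro γp γm y y'
    simp only [hrm]
    linear_combination (r₀ γp y * r₀ γp y') * hr₂cocycle γm y y'
  · intro γp γm x y hx hy
    simp only [hrp, hrm, hr₀]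
    rw [Finset.sum_insert hy, Finset.sum_insert hx, hφ y x]
    rw [neg_add, Real.exp_add, neg_add, Real.exp_add]
    ring
end
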